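/- Let S be an almost well-centered extension of a commutative ring R. Then for every ideal J of S, Rad(J) = Rad((J ∩ R)·S). -/
import Mathlib


theorem stmt10 {S : Type*} [CommRing S] (R : Subring S)
    (hawc : ∀ s : S, ∃ n : ℕ, 0 < n ∧ ∃ u : Sˣ, (u : S) * s ^ n ∈ R)
    (J : Ideal S) :
    J.radical = (Ideal.map R.subtype (Ideal.comap R.subtype J)).radical := by
  apply le_antisymm
  · intro s hs
    obtain ⟨m, hm⟩ := hs
    obtain ⟨n, hn, u, hu⟩ := hawc s
    refine ⟨n * m, ?_⟩
    have hr : ((u : S) * s ^ n) ^ m ∈ R := R.pow_mem hu m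
    have hrJ : ((u : S) * s ^ n) ^ m ∈ J := by
      rw [mul_pow, ← pow_mul, mul_comm n m, pow_mul]
      exact J.mul_mem_left _ (J.pow_mem_of_mem hm n hn)
    have hmem : ((u : S) * s ^ n) ^ m ∈ Ideal.map R.subtype (Ideal.comap R.subtype J) := by
      have : (⟨_, hr⟩ : R) ∈ Ideal.comap R.subtype J := hrJ
      exact Ideal.mem_map_of_mem R.subtype this
    have : s ^ (n * m) = ((u⁻¹ : Sˣ) : S) ^ m * ((u : S) * s ^ n) ^ m := by
      rw [mul_pow, ← mul_assoc, ← mul_pow, Units.inv_mul, one_pow, one_mul, pow_mul]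
    rw [this]
    exact Ideal.mul_mem_left _ _ hmem
  · apply Ideal.radical_mono
    rw [Ideal.map_le_iff_le_comap]
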